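/- Let V, E be real reflexive Banach spaces, Λ ⊆ E closed convex, b : V × E → ℝ bilinear bounded, A : V → V*, γ : V → X linear bounded, J : X → ℝ locally Lipschitz, f ∈ V*, and h : V → ℝ convex with the map u ↦ A(u)+γ*∂J(γu) h-relaxed monotone and h satisfying h(0)=0 and limsup_{t→0⁺} h(tv)/t ≥ 0, and A satisfying limsup_{t→0⁺}⟨A(tw+(1-t)v), w-v⟩ ≤ ⟨A(v), w-v⟩. Then the solution set S of the mixed variational-hemivariational inequality (the set of (u,λ) ∈ V × Λ with ⟨A(u), v-u⟩ + b(v-u,λ) + J⁰(γu; γv-γu) ≥ ⟨f, v-u⟩ for all v ∈ V and b(u, ρ-λ) ≤ 0 for all ρ ∈ Λ) is a convex subset of V × E. -/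

import Mathlib

open Filter Topology

/-- Clarke generalized directional derivative of `J` at `u` in direction `v`. -/
noncomputable def clarkeDeriv {V : Type*} [NormedAddCommGroup V] [NormedSpace ℝ V]
    (J : V → ℝ) (u v : V) : ℝ :=
  Filter.limsup (fun p : V × ℝ => (J (p.1 + p.2 • v) - J p.1) / p.2)
    ((𝓝 u) ×ˢ (𝓝[>] (0 : ℝ)))

/-- Clarke generalized gradient of `J` at `u`. -/
def clarkeGrad {V : Type*} [NormedAddCommGroup V] [NormedSpace ℝ V]
    (J : V → ℝ) (u : V) : Set (V →L[ℝ] ℝ) :=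
  {ξ | ∀ w, ξ w ≤ clarkeDeriv J u w}

namespace ClarkeAux

variable {X : Type*} [NormedAddCommGroup X] [NormedSpace ℝ X]

/-- difference quotient -/
noncomputable def dq (J : X → ℝ) (d : X) (p : X × ℝ) : ℝ :=
  (J (p.1 + p.2 • d) - J p.1) / p.2

noncomputable def F (x : X) : Filter (X × ℝ) := (𝓝 x) ×ˢ (𝓝[>] (0 : ℝ))

lemma clarkeDeriv_eq (J : X → ℝ) (x d : X) :
    clarkeDeriv J x d = Filter.limsup (dq J d) (F x) := rfl

instance F_neBot (x : X) : (F x).NeBot := by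
  unfold F
  have : (𝓝[>] (0:ℝ)).NeBot := nhdsGT_neBot (0:ℝ)
  infer_instance

/-- uniform local bound on difference quotients -/
lemma exists_unif_bound {J : X → ℝ} (hJ : LocallyLipschitz J) (x : X) :
    ∃ K : ℝ, 0 ≤ K ∧ ∃ U : Set X, IsOpen U ∧ x ∈ U ∧
      ∀ y ∈ U, ∀ d : X, ∀ᶠ p in F y, |dq J d p| ≤ K * ‖d‖ := by
  obtain ⟨K, s, hs, hls⟩ := hJ x
  obtain ⟨ε, hε, hball⟩ := Metric.mem_nhds_iff.1 hs
  refine ⟨K, K.coe_nonneg, Metric.ball x (ε/2), Metric.isOpen_ball, by simp [hε], ?_⟩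
  intro y hy d
  have hUy : Metric.ball x (ε/2) ∈ 𝓝 y := Metric.isOpen_ball.mem_nhds hy
  have h1 : ∀ᶠ z in 𝓝 y, z ∈ Metric.ball x (ε/2) := hUy
  have hδ : (0:ℝ) < (ε/2) / (‖d‖ + 1) := by positivity
  have h2 : ∀ᶠ t in 𝓝[>] (0:ℝ), t ∈ Set.Ioo 0 ((ε/2) / (‖d‖ + 1)) := by
    have : Set.Ioo (0:ℝ) ((ε/2) / (‖d‖ + 1)) ∈ 𝓝[>] (0:ℝ) :=
      Ioo_mem_nhdsGT_of_mem (by simp [hδ])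
    exact this
  have := h1.prod_mk h2
  refine this.mono ?_
  rintro ⟨z, t⟩ ⟨hz, ht⟩
  have ht0 : 0 < t := ht.1
  have hz1 : z ∈ s := hball (by
    have : dist z x < ε/2 := hz
    exact Metric.mem_ball.2 (lt_of_lt_of_le this (by linarith)))
  have hnorm : ‖t • d‖ < ε/2 := by
    rw [norm_smul, Real.norm_eq_abs, abs_of_pos ht0]
    calc t * ‖d‖ ≤ t * (‖d‖ + 1) := by nlinarith [ht0.le]
      _ < (ε/2) / (‖d‖ + 1) * (‖d‖ + 1) := by
          apply mul_lt_mul_of_pos_right ht.2 (by positivity)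
      _ = ε/2 := by field_simp
  have hz2 : z + t • d ∈ s := by
    apply hball
    have : dist (z + t • d) x ≤ dist (z + t•d) z + dist z x := dist_triangle _ _ _
    have h3 : dist (z + t•d) z = ‖t • d‖ := by
      rw [dist_eq_norm]; simp
    refine Metric.mem_ball.2 ?_
    have : dist (z + t • d) x < ε/2 + ε/2 := by
      calc dist (z + t • d) x ≤ dist (z + t•d) z + dist z x := dist_triangle _ _ _
        _ < ε/2 + ε/2 := by
            have := Metric.mem_ball.1 hz
            rw [h3]; linarith
    linarith
  have hd : dist (J (z + t • d)) (J z) ≤ K * dist (z + t • d) z := hls.dist_le_mul _ hz2 _ hz1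
  have hdd : dist (z + t • d) z = t * ‖d‖ := by
    rw [dist_eq_norm]; simp [norm_smul, abs_of_pos ht0]
  rw [Real.dist_eq, hdd] at hd
  show |(J (z + t • d) - J z) / t| ≤ (K:ℝ) * ‖d‖
  rw [abs_div, abs_of_pos ht0, div_le_iff₀ ht0]
  calc |J (z + t • d) - J z| ≤ K * (t * ‖d‖) := hd
    _ = K * ‖d‖ * t := by ring

end ClarkeAux

namespace ClarkeAux

variable {X : Type*} [NormedAddCommGroup X] [NormedSpace ℝ X] {J : X → ℝ}

lemma exists_bound (hJ : LocallyLipschitz J) (x : X) :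
    ∃ K : ℝ, 0 ≤ K ∧ ∀ d : X, ∀ᶠ p in F x, |dq J d p| ≤ K * ‖d‖ := by
  obtain ⟨K, hK0, U, hUo, hxU, hU⟩ := exists_unif_bound hJ x
  exact ⟨K, hK0, hU x hxU⟩

lemma isBounded_dq (hJ : LocallyLipschitz J) (x d : X) :
    (F x).IsBoundedUnder (· ≤ ·) (dq J d) := by
  obtain ⟨K, _, hK⟩ := exists_bound hJ x
  exact ⟨K * ‖d‖, (hK d).mono fun p hp => (abs_le.1 hp).2⟩

lemma isBoundedGe_dq (hJ : LocallyLipschitz J) (x d : X) :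
    (F x).IsBoundedUnder (· ≥ ·) (dq J d) := by
  obtain ⟨K, _, hK⟩ := exists_bound hJ x
  exact ⟨-(K * ‖d‖), (hK d).mono fun p hp => (abs_le.1 hp).1⟩

lemma isCobounded_dq (hJ : LocallyLipschitz J) (x d : X) :
    (F x).IsCoboundedUnder (· ≤ ·) (dq J d) :=
  (isBoundedGe_dq hJ x d).isCoboundedUnder_le

lemma clarkeDeriv_le_bound (hJ : LocallyLipschitz J) {x d : X} {K : ℝ}
    (hK : ∀ᶠ p in F x, |dq J d p| ≤ K) : clarkeDeriv J x d ≤ K :=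
  limsup_le_of_le (isCobounded_dq hJ x d) (hK.mono fun p hp => (abs_le.1 hp).2)

lemma bound_le_clarkeDeriv (hJ : LocallyLipschitz J) {x d : X} {K : ℝ}
    (hK : ∀ᶠ p in F x, |dq J d p| ≤ K) : -K ≤ clarkeDeriv J x d :=
  le_limsup_of_frequently_le
    ((hK.mono fun p hp => (abs_le.1 hp).1).frequently) (isBounded_dq hJ x d)

lemma abs_clarkeDeriv_le (hJ : LocallyLipschitz J) {x d : X} {K : ℝ}
    (hK : ∀ᶠ p in F x, |dq J d p| ≤ K) : |clarkeDeriv J x d| ≤ K :=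
  abs_le.2 ⟨bound_le_clarkeDeriv hJ hK, clarkeDeriv_le_bound hJ hK⟩

lemma clarkeDeriv_zero (J : X → ℝ) (x : X) : clarkeDeriv J x 0 = 0 := by
  rw [clarkeDeriv_eq]
  have : dq J (0:X) = fun _ => (0:ℝ) := by
    funext p; simp [dq]
  rw [this, limsup_const]

lemma tendsto_snd_F (x : X) : Tendsto (Prod.snd : X × ℝ → ℝ) (F x) (𝓝[>] (0:ℝ)) :=
  tendsto_snd

lemma tendsto_fst_F (x : X) : Tendsto (Prod.fst : X × ℝ → X) (F x) (𝓝 x) :=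
  tendsto_fst

lemma tendsto_snd_F_nhds (x : X) : Tendsto (Prod.snd : X × ℝ → ℝ) (F x) (𝓝 (0:ℝ)) :=
  (tendsto_snd_F x).mono_right nhdsWithin_le_nhds

lemma limsup_comp_le {α β : Type*} {l : Filter α} {l' : Filter β} [l.NeBot] {φ : α → β}
    {f : β → ℝ} (htend : Tendsto φ l l') (hlb : l.IsBoundedUnder (· ≥ ·) (f ∘ φ))
    (hub : l'.IsBoundedUnder (· ≤ ·) f) :
    Filter.limsup (f ∘ φ) l ≤ Filter.limsup f l' := by
  have h1 : Filter.limsup (f ∘ φ) l = Filter.limsSup (Filter.map f (Filter.map φ l)) := by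
    rw [Filter.map_map]; rfl
  have h2 : Filter.limsup f l' = Filter.limsSup (Filter.map f l') := rfl
  rw [h1, h2]
  apply limsSup_le_limsSup
  · have : (Filter.map (f ∘ φ) l).IsCobounded (· ≤ ·) :=
      Filter.IsBoundedUnder.isCoboundedUnder_le hlb
    rwa [← Filter.map_map] at this
  · exact hub
  · intro a ha
    have : Filter.map f (Filter.map φ l) ≤ Filter.map f l' := Filter.map_mono htend
    exact this ha

/-- subadditivity -/
lemma clarkeDeriv_add_le (hJ : LocallyLipschitz J) (x a c : X) :
    clarkeDeriv J x (a + c) ≤ clarkeDeriv J x a + clarkeDeriv J x c := by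
  classical
  set φ : X × ℝ → X × ℝ := fun p => (p.1 + p.2 • c, p.2) with hφ
  have htend : Tendsto φ (F x) (F x) := by
    refine Tendsto.prodMk ?_ (tendsto_snd_F x)
    have : Tendsto (fun p : X × ℝ => p.1 + p.2 • c) (F x) (𝓝 (x + (0:ℝ) • c)) :=
      ((tendsto_fst_F x).add (((tendsto_snd_F_nhds x)).smul tendsto_const_nhds))
    simpa using this
  have hkey : ∀ p : X × ℝ, dq J (a + c) p = dq J a (φ p) + dq J c p := by
    rintro ⟨z, t⟩
    simp only [dq, hφ]
    rw [← add_div]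
    congr 1
    have : z + t • (a + c) = z + t • c + t • a := by
      rw [smul_add]; abel
    rw [this]; ring
  have h1 : Filter.limsup (dq J a ∘ φ) (F x) ≤ clarkeDeriv J x a := by
    apply limsup_comp_le htend _ (isBounded_dq hJ x a)
    obtain ⟨K, _, hK⟩ := exists_bound hJ x
    refine ⟨-(K * ‖a‖), ?_⟩
    have h2 : ∀ᶠ p in F x, -(K * ‖a‖) ≤ dq J a (φ p) :=
      htend ((hK a).mono fun q hq => (abs_le.1 hq).1)
    simpa [Filter.eventually_map] using h2
  -- now limsup of a sum
  have heq : Filter.limsup (dq J (a + c)) (F x)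
      = Filter.limsup (fun p => (dq J a ∘ φ) p + dq J c p) (F x) := by
    apply Filter.limsup_congr
    exact Filter.Eventually.of_forall fun p => hkey p
  rw [clarkeDeriv_eq, heq]
  -- ε-argument
  have hb1 : (F x).IsBoundedUnder (· ≤ ·) (dq J a ∘ φ) := by
    obtain ⟨K, _, hK⟩ := exists_bound hJ x
    exact ⟨K * ‖a‖, (htend ((hK a).mono fun q hq => (abs_le.1 hq).2) :)⟩
  have hb2 := isBounded_dq hJ x c
  have hcb : (F x).IsCoboundedUnder (· ≤ ·) (fun p => (dq J a ∘ φ) p + dq J c p) := by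
    obtain ⟨K, _, hK⟩ := exists_bound hJ x
    apply Filter.IsBoundedUnder.isCoboundedUnder_le
    refine ⟨-(K * ‖a‖) + -(K * ‖c‖), ?_⟩
    have e1 : ∀ᶠ p in F x, -(K * ‖a‖) ≤ (dq J a ∘ φ) p :=
      htend ((hK a).mono fun q hq => (abs_le.1 hq).1)
    have e2 : ∀ᶠ p in F x, -(K * ‖c‖) ≤ dq J c p :=
      (hK c).mono fun q hq => (abs_le.1 hq).1
    have := e1.and e2
    simpa [Filter.eventually_map] using this.mono fun p hp => add_le_add hp.1 hp.2
  refine le_of_forall_pos_le_add fun ε hε => ?_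
  have l1 : Filter.limsup (dq J a ∘ φ) (F x) < clarkeDeriv J x a + ε/2 :=
    lt_of_le_of_lt h1 (by linarith)
  have l2 : Filter.limsup (dq J c) (F x) < clarkeDeriv J x c + ε/2 := by
    rw [← clarkeDeriv_eq]; linarith
  have e1 := Filter.eventually_lt_of_limsup_lt l1 hb1
  have e2 := Filter.eventually_lt_of_limsup_lt l2 hb2
  have : ∀ᶠ p in F x, (dq J a ∘ φ) p + dq J c p
      ≤ clarkeDeriv J x a + clarkeDeriv J x c + ε := by
    filter_upwards [e1, e2] with p hp1 hp2
    linarith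
  exact Filter.limsup_le_of_le hcb this

end ClarkeAux

namespace ClarkeAux

variable {X : Type*} [NormedAddCommGroup X] [NormedSpace ℝ X] {J : X → ℝ}

lemma tendsto_const_mul_nhdsGT {c : ℝ} (hc : 0 < c) :
    Tendsto (fun t : ℝ => c * t) (𝓝[>] (0:ℝ)) (𝓝[>] (0:ℝ)) := by
  rw [tendsto_nhdsWithin_iff]
  constructor
  · have : Tendsto (fun t : ℝ => c * t) (𝓝 (0:ℝ)) (𝓝 (c * 0)) :=
      (continuous_const.mul continuous_id).tendsto 0
    simpa using this.mono_left nhdsWithin_le_nhds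
  · filter_upwards [self_mem_nhdsWithin] with t ht
    exact mul_pos hc ht

lemma map_psi_F (x : X) {c : ℝ} (hc : 0 < c) :
    Filter.map (fun p : X × ℝ => (p.1, c * p.2)) (F x) = F x := by
  apply le_antisymm
  · have : Tendsto (fun p : X × ℝ => (p.1, c * p.2)) (F x) (F x) :=
      Tendsto.prodMk (tendsto_fst_F x)
        ((tendsto_const_mul_nhdsGT hc).comp (tendsto_snd_F x))
    exact this
  · have hinv : Tendsto (fun p : X × ℝ => (p.1, c⁻¹ * p.2)) (F x) (F x) :=
      Tendsto.prodMk (tendsto_fst_F x)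
        ((tendsto_const_mul_nhdsGT (by positivity)).comp (tendsto_snd_F x))
    have : F x = Filter.map (fun p : X × ℝ => (p.1, c * p.2))
        (Filter.map (fun p : X × ℝ => (p.1, c⁻¹ * p.2)) (F x)) := by
      rw [Filter.map_map]
      have : ((fun p : X × ℝ => (p.1, c * p.2)) ∘ (fun p : X × ℝ => (p.1, c⁻¹ * p.2)))
          = id := by
        funext p
        simp [Function.comp, mul_inv_cancel_left₀ (ne_of_gt hc)]
      rw [this, Filter.map_id]
    nth_rewrite 1 [this]
    exact Filter.map_mono hinv

/-- positive homogeneity -/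
lemma clarkeDeriv_smul (hJ : LocallyLipschitz J) (x d : X) {c : ℝ} (hc : 0 < c) :
    clarkeDeriv J x (c • d) = c * clarkeDeriv J x d := by
  set ψ : X × ℝ → X × ℝ := fun p => (p.1, c * p.2) with hψ
  have hkey : ∀ p : X × ℝ, dq J (c • d) p = c * dq J d (ψ p) := by
    rintro ⟨z, t⟩
    simp only [dq, hψ]
    have h1 : z + t • c • d = z + (c * t) • d := by
      rw [smul_smul, mul_comm]
    rw [h1]
    rcases eq_or_ne t 0 with rfl | ht
    · simp
    · field_simp
  have heq : clarkeDeriv J x (c • d)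
      = Filter.limsup (fun p => c * dq J d (ψ p)) (F x) := by
    rw [clarkeDeriv_eq]
    exact Filter.limsup_congr (Filter.Eventually.of_forall hkey)
  rw [heq]
  have hmono : Monotone (fun r : ℝ => c * r) := fun r s hrs => by simpa using mul_le_mul_of_nonneg_left hrs hc.le
  have hcomp : Filter.limsup (dq J d ∘ ψ) (F x) = clarkeDeriv J x d := by
    have : Filter.limsup (dq J d ∘ ψ) (F x)
        = Filter.limsup (dq J d) (Filter.map ψ (F x)) := by
      rw [show Filter.limsup (dq J d) (Filter.map ψ (F x))
          = Filter.limsSup (Filter.map (dq J d) (Filter.map ψ (F x))) from rfl,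
        Filter.map_map]
      rfl
    rw [this, map_psi_F x hc, ← clarkeDeriv_eq]
  have hbdd : (F x).IsBoundedUnder (· ≤ ·) (dq J d ∘ ψ) := by
    obtain ⟨K, _, hK⟩ := exists_bound hJ x
    have htend : Tendsto ψ (F x) (F x) := le_of_eq (map_psi_F x hc)
    exact ⟨K * ‖d‖, (htend ((hK d).mono fun q hq => (abs_le.1 hq).2) :)⟩
  have hcb : (F x).IsCoboundedUnder (· ≤ ·) (dq J d ∘ ψ) := by
    obtain ⟨K, _, hK⟩ := exists_bound hJ x
    have htend : Tendsto ψ (F x) (F x) := le_of_eq (map_psi_F x hc)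
    apply Filter.IsBoundedUnder.isCoboundedUnder_le
    exact ⟨-(K * ‖d‖), (htend ((hK d).mono fun q hq => (abs_le.1 hq).1) :)⟩
  have := hmono.map_limsup_of_continuousAt (F := F x) (dq J d ∘ ψ)
    (by exact (continuous_const.mul continuous_id).continuousAt) hbdd hcb
  rw [show (fun p => c * dq J d (ψ p)) = (fun r : ℝ => c * r) ∘ (dq J d ∘ ψ) from rfl, ← this,
    hcomp]

lemma neg_clarkeDeriv_neg_le (hJ : LocallyLipschitz J) (x d : X) :
    -clarkeDeriv J x (-d) ≤ clarkeDeriv J x d := by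
  have h0 := clarkeDeriv_zero J x
  have := clarkeDeriv_add_le hJ x d (-d)
  simp only [add_neg_cancel, h0] at this
  linarith

end ClarkeAux

namespace ClarkeAux

variable {X : Type*} [NormedAddCommGroup X] [NormedSpace ℝ X] {J : X → ℝ}

/-- upper semicontinuity of the Clarke derivative in the base point -/
lemma clarkeDeriv_usc (hJ : LocallyLipschitz J) (x d : X) {ε : ℝ} (hε : 0 < ε) :
    ∃ U : Set X, IsOpen U ∧ x ∈ U ∧
      ∀ y ∈ U, clarkeDeriv J y d ≤ clarkeDeriv J x d + ε := by
  have hlt : Filter.limsup (dq J d) (F x) < clarkeDeriv J x d + ε := by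
    rw [← clarkeDeriv_eq]; linarith
  have hev : ∀ᶠ p in F x, dq J d p < clarkeDeriv J x d + ε :=
    Filter.eventually_lt_of_limsup_lt hlt (isBounded_dq hJ x d)
  simp only [F] at hev
  rw [Filter.eventually_prod_iff] at hev
  obtain ⟨pa, hpa, pb, hpb, hcomb⟩ := hev
  have hta : {z | pa z} ∈ 𝓝 x := hpa
  refine ⟨interior {z | pa z}, isOpen_interior, mem_interior_iff_mem_nhds.2 hta, ?_⟩
  intro y hy
  have hev2 : ∀ᶠ p in F y, dq J d p < clarkeDeriv J x d + ε := by
    have h1 : ∀ᶠ z in 𝓝 y, pa z := by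
      have : interior {z | pa z} ∈ 𝓝 y := isOpen_interior.mem_nhds hy
      exact Filter.mem_of_superset this interior_subset
    have h2 : ∀ᶠ t in 𝓝[>] (0:ℝ), pb t := hpb
    filter_upwards [h1.prod_mk h2] with p hp
    exact hcomb hp.1 hp.2
  exact Filter.limsup_le_of_le (isCobounded_dq hJ y d)
    (hev2.mono fun p hp => hp.le)

/-- uniform bound on the Clarke derivative near a point -/
lemma clarkeDeriv_unif_bound (hJ : LocallyLipschitz J) (x : X) :
    ∃ K : ℝ, 0 ≤ K ∧ ∃ U : Set X, IsOpen U ∧ x ∈ U ∧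
      ∀ y ∈ U, ∀ d : X, |clarkeDeriv J y d| ≤ K * ‖d‖ := by
  obtain ⟨K, hK0, U, hUo, hxU, hU⟩ := exists_unif_bound hJ x
  exact ⟨K, hK0, U, hUo, hxU, fun y hy d => abs_clarkeDeriv_le hJ (hU y hy d)⟩

/-- existence of a supporting element of the Clarke gradient -/
lemma exists_grad (hJ : LocallyLipschitz J) (x d : X) :
    ∃ ξ : X →L[ℝ] ℝ, ξ ∈ clarkeGrad J x ∧ clarkeDeriv J x d ≤ ξ d := by
  obtain ⟨K, hK0, hK⟩ := exists_bound hJ x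
  have hNbound : ∀ w : X, |clarkeDeriv J x w| ≤ K * ‖w‖ := fun w =>
    abs_clarkeDeriv_le hJ (hK w)
  set N : X → ℝ := clarkeDeriv J x with hN
  have N_hom : ∀ c : ℝ, 0 < c → ∀ w, N (c • w) = c * N w := fun c hc w =>
    clarkeDeriv_smul hJ x w hc
  have N_add : ∀ w z, N (w + z) ≤ N w + N z := fun w z => clarkeDeriv_add_le hJ x w z
  have N_zero : N 0 = 0 := clarkeDeriv_zero J x
  have N_negle : ∀ w, -N (-w) ≤ N w := fun w => neg_clarkeDeriv_neg_le hJ x w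
  -- construct a linear functional g ≤ N with g d = N d (if d ≠ 0) or any g ≤ N
  have main : ∃ g : X →ₗ[ℝ] ℝ, (∀ w, g w ≤ N w) ∧ N d ≤ g d := by
    rcases eq_or_ne d 0 with rfl | hd
    · -- d = 0 : extend from the zero subspace... use Hahn-Banach on span of 0 is trivial;
      -- instead take the zero pmap on ⊥
      have hf : ∀ w : (⊥ : Submodule ℝ X), ((0 : (⊥ : Submodule ℝ X) →ₗ[ℝ] ℝ)) w ≤ N w := by
        rintro ⟨w, hw⟩
        have : w = 0 := by simpa using hw
        simp [this, N_zero]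
      obtain ⟨g, _, hgle⟩ := exists_extension_of_le_sublinear
        ⟨(⊥ : Submodule ℝ X), (0 : (⊥ : Submodule ℝ X) →ₗ[ℝ] ℝ)⟩ N N_hom N_add hf
      exact ⟨g, hgle, by simp [N_zero]⟩
    · set pf : X →ₗ.[ℝ] ℝ := LinearPMap.mkSpanSingleton' d (N d)
        (fun c hc => by
          rcases eq_or_ne c 0 with rfl | hc0
          · simp
          · exact absurd ((smul_eq_zero.1 hc).resolve_left hc0) hd) with hpf
      have hf : ∀ w : pf.domain, pf w ≤ N w := by
        rintro ⟨w, hw⟩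
        have hw' : w ∈ Submodule.span ℝ {d} := by
          simpa [hpf, LinearPMap.domain_mkSpanSingleton] using hw
        obtain ⟨c, rfl⟩ := Submodule.mem_span_singleton.1 hw'
        have happ : pf ⟨c • d, hw⟩ = c • N d := LinearPMap.mkSpanSingleton'_apply _ _ _ c _
        rw [happ]
        rcases lt_trichotomy c 0 with hc | rfl | hc
        · have h1 : N (c • d) = (-c) * N (-d) := by
            have : c • d = (-c) • (-d) := by simp
            rw [this, N_hom (-c) (by linarith) (-d)]
          rw [h1]
          have h2 : -N (-d) ≤ N d := N_negle d
          have : c * N d ≤ (-c) * N (-d) := by nlinarith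
          simpa [smul_eq_mul] using this
        · simp [N_zero]
        · rw [N_hom c hc d]; simp [smul_eq_mul]
      obtain ⟨g, hagree, hgle⟩ := exists_extension_of_le_sublinear pf N N_hom N_add hf
      refine ⟨g, hgle, ?_⟩
      have hd_mem : d ∈ pf.domain := by
        rw [hpf, LinearPMap.domain_mkSpanSingleton]
        exact Submodule.mem_span_singleton_self d
      have : g d = pf ⟨d, hd_mem⟩ := hagree ⟨d, hd_mem⟩
      rw [this]
      have : pf ⟨d, hd_mem⟩ = N d := by
        have h1 : (⟨d, hd_mem⟩ : pf.domain) = ⟨(1:ℝ) • d, by simpa using hd_mem⟩ := by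
          simp
        rw [h1, LinearPMap.mkSpanSingleton'_apply]
        simp
      rw [this]
  obtain ⟨g, hgle, hgd⟩ := main
  have hgbound : ∀ w, ‖g w‖ ≤ K * ‖w‖ := by
    intro w
    rw [Real.norm_eq_abs, abs_le]
    constructor
    · have h1 : g (-w) ≤ N (-w) := hgle (-w)
      have h2 : N (-w) ≤ K * ‖w‖ := le_trans (le_abs_self _) (by simpa using hNbound (-w))
      have : g (-w) = -g w := by simp
      linarith [this ▸ h1]
    · exact le_trans (hgle w) (le_trans (le_abs_self _) (hNbound w))
  refine ⟨LinearMap.mkContinuous g K hgbound, fun w => ?_, ?_⟩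
  · exact hgle w
  · exact hgd

/-- the Clarke gradient is nonempty -/
lemma grad_nonempty (hJ : LocallyLipschitz J) (x : X) :
    ∃ ξ : X →L[ℝ] ℝ, ξ ∈ clarkeGrad J x :=
  (exists_grad hJ x 0).imp fun ξ hξ => hξ.1

end ClarkeAux


set_option maxHeartbeats 2000000 in
open ClarkeAux in
/-- Theorem 3.3(ii): convexity of the solution set of the mixed
variational-hemivariational inequality when `h` is convex. -/
theorem solution_set_convex
    {V E X : Type*} [NormedAddCommGroup V] [NormedSpace ℝ V] [CompleteSpace V]
    [NormedAddCommGroup E] [NormedSpace ℝ E] [CompleteSpace E]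
    [NormedAddCommGroup X] [NormedSpace ℝ X]
    (hreflV : Function.Surjective (NormedSpace.inclusionInDoubleDual ℝ V))
    (hreflE : Function.Surjective (NormedSpace.inclusionInDoubleDual ℝ E))
    (Λ : Set E) (hΛc : IsClosed Λ) (hΛconv : Convex ℝ Λ)
    (b : V →ₗ[ℝ] E →ₗ[ℝ] ℝ) (hb : ∃ M : ℝ, ∀ (v : V) (ρ : E), |b v ρ| ≤ M * ‖v‖ * ‖ρ‖)
    (A : V → (V →L[ℝ] ℝ)) (γ : V →L[ℝ] X) (J : X → ℝ) (hJ : LocallyLipschitz J)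
    (f : V →L[ℝ] ℝ) (h : V → ℝ) (hhconv : ConvexOn ℝ Set.univ h)
    (hh0 : h 0 = 0)
    (hhlim : ∀ v : V, 0 ≤ Filter.limsup (fun t : ℝ => h (t • v) / t) (𝓝[>] (0 : ℝ)))
    (hA : ∀ w v : V,
      Filter.limsup (fun t : ℝ => A (t • w + (1 - t) • v) (w - v)) (𝓝[>] (0 : ℝ))
        ≤ A v (w - v))
    (hmono : ∀ u v : V, ∀ ξu ∈ clarkeGrad J (γ u), ∀ ξv ∈ clarkeGrad J (γ v),
      h (u - v) ≤ A u (u - v) + ξu (γ (u - v)) - A v (u - v) - ξv (γ (u - v))) :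
    Convex ℝ {p : V × E | p.2 ∈ Λ ∧
      (∀ v : V, f (v - p.1) ≤
        A p.1 (v - p.1) + b (v - p.1) p.2 + clarkeDeriv J (γ p.1) (γ v - γ p.1)) ∧
      (∀ ρ ∈ Λ, b p.1 (ρ - p.2) ≤ 0)} := by
  classical
  -- convexity inequality for h on the whole space
  have hconv' : ∀ (x y : V) (s r : ℝ), 0 ≤ s → 0 ≤ r → s + r = 1 →
      h (s • x + r • y) ≤ s * h x + r * h y := by
    intro x y s r hs hr hsr
    simpa [smul_eq_mul] using hhconv.2 (Set.mem_univ x) (Set.mem_univ y) hs hr hsr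
  have hsmall : ∀ (x : V) (s : ℝ), 0 ≤ s → s ≤ 1 → h (s • x) ≤ s * h x := by
    intro x s hs hs1
    have := hconv' x 0 s (1 - s) hs (by linarith) (by ring)
    simpa [hh0] using this
  have hnegle : ∀ x : V, -h (-x) ≤ h x := by
    intro x
    have := hconv' x (-x) (1/2) (1/2) (by norm_num) (by norm_num) (by norm_num)
    have h2 : ((1:ℝ)/2) • x + ((1:ℝ)/2) • (-x) = 0 := by module
    rw [h2, hh0] at this
    linarith
  -- Minty-type formulation
  set MT : V → E → Prop := fun u l => ∀ v : V, ∀ ρ ∈ Λ,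
    f (v - u) + h (v - u) ≤ A v (v - u) + b v l - b u ρ
      - clarkeDeriv J (γ v) (γ u - γ v) with hMT
  -- a solution satisfies the Minty formulation
  have sol_minty : ∀ u : V, ∀ l : E, l ∈ Λ →
      (∀ v : V, f (v - u) ≤
        A u (v - u) + b (v - u) l + clarkeDeriv J (γ u) (γ v - γ u)) →
      (∀ ρ ∈ Λ, b u (ρ - l) ≤ 0) → MT u l := by
    intro u l hl hineq hcompl v ρ hρ
    set d : V := v - u with hd
    obtain ⟨ξu, hξu, hξud⟩ := exists_grad hJ (γ u) (γ d)
    obtain ⟨ξv, hξv, hξvd⟩ := exists_grad hJ (γ v) (-(γ d))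
    have hm := hmono v u ξv hξv ξu hξu
    rw [show v - u = d from rfl] at hm
    have h1 : f d ≤ A u d + b d l + ξu (γ d) := by
      have := hineq v
      have e1 : γ v - γ u = γ d := by rw [hd, map_sub]
      rw [e1] at this
      linarith
    -- ξv (γ d) ≤ - clarkeDeriv J (γ v) (-(γ d))
    have h2 : ξv (γ d) ≤ - clarkeDeriv J (γ v) (-(γ d)) := by
      have : ξv (-(γ d)) = - ξv (γ d) := by simp
      linarith [this ▸ hξvd]
    have h3 : b u ρ ≤ b u l := by
      have := hcompl ρ hρ
      rw [map_sub] at this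
      linarith
    have e2 : γ u - γ v = -(γ d) := by rw [hd, map_sub]; abel
    have e3 : b d l = b v l - b u l := by rw [hd, map_sub]; simp
    rw [e2]
    have := hm  -- h d ≤ A v d + ξv (γ d) - A u d - ξu (γ d)
    linarith
  -- the Minty formulation implies being a solution
  have minty_sol : ∀ u : V, ∀ l : E, l ∈ Λ → MT u l →
      (∀ v : V, f (v - u) ≤
        A u (v - u) + b (v - u) l + clarkeDeriv J (γ u) (γ v - γ u)) ∧
      (∀ ρ ∈ Λ, b u (ρ - l) ≤ 0) := by
    intro u l hl hmt
    constructor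
    · -- the variational inequality
      intro w
      set d : V := w - u with hd
      set vt : ℝ → V := fun t => t • w + (1 - t) • u with hvt
      set g : ℝ → ℝ := fun t => A (vt t) d with hg
      have hvtu : Filter.Tendsto vt (𝓝[>] (0:ℝ)) (𝓝 u) := by
        have hc : Continuous vt := by
          apply Continuous.add
          · exact continuous_id.smul continuous_const
          · exact (continuous_const.sub continuous_id).smul continuous_const
        have : Filter.Tendsto vt (𝓝 (0:ℝ)) (𝓝 (vt 0)) := hc.tendsto 0
        have e : vt 0 = u := by simp [hvt]
        rw [e] at this
        exact this.mono_left nhdsWithin_le_nhds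
      have hγvt : Filter.Tendsto (fun t => γ (vt t)) (𝓝[>] (0:ℝ)) (𝓝 (γ u)) :=
        (γ.continuous.tendsto u).comp hvtu
      have ht0 : ∀ᶠ t in 𝓝[>] (0:ℝ), 0 < t := eventually_mem_nhdsWithin
      have ht1 : ∀ᶠ t in 𝓝[>] (0:ℝ), t < 1 :=
        nhdsWithin_le_nhds (Iio_mem_nhds (by norm_num : (0:ℝ) < 1))
      -- the Minty inequality along the segment, divided by t
      have hdagger : ∀ t : ℝ, 0 < t →
          f d + h (t • d) / t ≤ g t + b d l - clarkeDeriv J (γ (vt t)) (-(γ d)) := by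
        intro t ht
        have hbig := hmt (vt t) l hl
        have hsub : vt t - u = t • d := by
          rw [hvt, hd]; module
        have e1 : f (vt t - u) = t * f d := by rw [hsub, map_smul, smul_eq_mul]
        have e2 : A (vt t) (vt t - u) = t * g t := by
          rw [hsub, map_smul, smul_eq_mul, hg]
        have e3 : b (vt t) l - b u l = t * b d l := by
          rw [← LinearMap.sub_apply, ← map_sub, hsub, map_smul,
            LinearMap.smul_apply, smul_eq_mul]
        have e4 : γ u - γ (vt t) = t • (-(γ d)) := by
          rw [show γ u - γ (vt t) = -(γ (vt t) - γ u) by abel, ← map_sub, hsub,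
            map_smul]
          rw [smul_neg]
        have e5 : clarkeDeriv J (γ (vt t)) (γ u - γ (vt t))
            = t * clarkeDeriv J (γ (vt t)) (-(γ d)) := by
          rw [e4, clarkeDeriv_smul hJ _ _ ht]
        rw [e1, e2, e5, hsub] at hbig
        -- hbig : t * f d + h (t • d) ≤ t * g t + b (vt t) l - b u ρ... with ρ := l
        have h6 : h (t • d) / t ≤ g t + b d l - clarkeDeriv J (γ (vt t)) (-(γ d)) - f d := by
          rw [div_le_iff₀ ht]
          nlinarith [hbig, e3]
        linarith
      -- Step B : g is eventually bounded above
      obtain ⟨ξw, hξw⟩ := grad_nonempty hJ (γ w)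
      obtain ⟨K, hK0, U, hUo, hγuU, hUbd⟩ := clarkeDeriv_unif_bound hJ (γ u)
      have hUev : ∀ᶠ t in 𝓝[>] (0:ℝ), γ (vt t) ∈ U := hγvt (hUo.mem_nhds hγuU)
      have hgbdd : Filter.IsBoundedUnder (· ≤ ·) (𝓝[>] (0:ℝ)) g := by
        refine ⟨h d + K * ‖γ (u - w)‖ - A w (u - w) - ξw (γ (u - w)), ?_⟩
        rw [Filter.eventually_map]
        filter_upwards [hUev, ht0, ht1] with t hU' ht0' ht1'
        obtain ⟨ξ₁, hξ₁⟩ := grad_nonempty hJ (γ (vt t))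
        have hmm := hmono (vt t) w ξ₁ hξ₁ ξw hξw
        have hsub : vt t - w = (1 - t) • (u - w) := by rw [hvt]; module
        have e1 : A (vt t) (vt t - w) = (1 - t) * (-(g t)) := by
          rw [hsub, map_smul, smul_eq_mul]
          congr 1
          rw [show u - w = -d by rw [hd]; abel, map_neg, hg]
        have e2 : ξ₁ (γ (vt t - w)) = (1 - t) * ξ₁ (γ (u - w)) := by
          rw [hsub, map_smul, map_smul, smul_eq_mul]
        have e3 : A w (vt t - w) = (1 - t) * A w (u - w) := by
          rw [hsub, map_smul, smul_eq_mul]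
        have e4 : ξw (γ (vt t - w)) = (1 - t) * ξw (γ (u - w)) := by
          rw [hsub, map_smul, map_smul, smul_eq_mul]
        rw [e1, e2, e3, e4, hsub] at hmm
        have hlow : -((1 - t) * h d) ≤ h ((1 - t) • (u - w)) := by
          have l1 : h ((1 - t) • (w - u)) ≤ (1 - t) * h (w - u) :=
            hsmall _ _ (by linarith) (by linarith)
          have l2 : -h (-((1 - t) • (u - w))) ≤ h ((1 - t) • (u - w)) := hnegle _
          have l3 : -((1 - t) • (u - w)) = (1 - t) • (w - u) := by module
          rw [l3] at l2
          rw [hd]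
          linarith
        have hs : (0:ℝ) < 1 - t := by linarith
        have hZ : 0 ≤ h d + ξ₁ (γ (u - w)) - A w (u - w) - ξw (γ (u - w)) - g t := by
          have h9 : (1 - t) * 0 ≤ (1 - t) *
              (h d + ξ₁ (γ (u - w)) - A w (u - w) - ξw (γ (u - w)) - g t) := by
            nlinarith [hmm, hlow]
          exact le_of_mul_le_mul_left h9 hs
        have hξ₁bd : ξ₁ (γ (u - w)) ≤ K * ‖γ (u - w)‖ := by
          have := hξ₁ (γ (u - w))
          have h10 := hUbd _ hU' (γ (u - w))
          calc ξ₁ (γ (u - w)) ≤ clarkeDeriv J (γ (vt t)) (γ (u - w)) := this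
            _ ≤ |clarkeDeriv J (γ (vt t)) (γ (u - w))| := le_abs_self _
            _ ≤ K * ‖γ (u - w)‖ := h10
        linarith
      -- Step C : eventually g t < A u d + ε
      have hlimg : Filter.limsup g (𝓝[>] (0:ℝ)) ≤ A u d := by
        have := hA w u
        rw [show w - u = d from rfl] at this
        exact this
      -- Step A : h-term frequently > -ε
      have hlb_h : ∀ᶠ t in 𝓝[>] (0:ℝ), -h (-d) ≤ h (t • d) / t := by
        filter_upwards [ht0, ht1] with t ht0' ht1'
        have l1 : h (t • (-d)) ≤ t * h (-d) := hsmall _ _ ht0'.le ht1'.le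
        have l2 : -h (-(t • d)) ≤ h (t • d) := hnegle _
        have l3 : -(t • d) = t • (-d) := by module
        rw [l3] at l2
        rw [le_div_iff₀ ht0']
        nlinarith
      have hhcb : Filter.IsCoboundedUnder (· ≤ ·) (𝓝[>] (0:ℝ))
          (fun t : ℝ => h (t • d) / t) :=
        Filter.IsBoundedUnder.isCoboundedUnder_le ⟨-h (-d), by
          simpa [Filter.eventually_map] using hlb_h⟩
      -- wrap up with an ε-argument
      have main : ∀ ε : ℝ, 0 < ε →
          f d ≤ A u d + b d l + clarkeDeriv J (γ u) (γ d) + ε := by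
        intro ε hε
        have hε3 : 0 < ε / 3 := by linarith
        have hfreq : ∃ᶠ t in 𝓝[>] (0:ℝ), -(ε/3) < h (t • d) / t :=
          Filter.frequently_lt_of_lt_limsup hhcb (lt_of_lt_of_le (by linarith) (hhlim d))
        have hevg : ∀ᶠ t in 𝓝[>] (0:ℝ), g t < A u d + ε/3 :=
          Filter.eventually_lt_of_limsup_lt (lt_of_le_of_lt hlimg (by linarith)) hgbdd
        obtain ⟨U₂, hU₂o, hγuU₂, hU₂⟩ := clarkeDeriv_usc hJ (γ u) (γ d) hε3
        have hU₂ev : ∀ᶠ t in 𝓝[>] (0:ℝ), γ (vt t) ∈ U₂ := hγvt (hU₂o.mem_nhds hγuU₂)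
        have hcomb := hfreq.and_eventually (hevg.and (hU₂ev.and ht0))
        obtain ⟨t, hht, hgt, hU₂t, ht0'⟩ := hcomb.exists
        have hdg := hdagger t ht0'
        have hcd1 : -clarkeDeriv J (γ (vt t)) (-(γ d)) ≤ clarkeDeriv J (γ (vt t)) (γ d) :=
          neg_clarkeDeriv_neg_le hJ _ _
        have hcd2 : clarkeDeriv J (γ (vt t)) (γ d) ≤ clarkeDeriv J (γ u) (γ d) + ε/3 :=
          hU₂ _ hU₂t
        linarith
      have hfin := le_of_forall_pos_le_add main
      have e : γ w - γ u = γ d := by rw [hd, map_sub]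
      rw [e]
      exact hfin
    · -- complementarity
      intro ρ hρ
      have := hmt u ρ hρ
      simp only [sub_self, map_zero, hh0] at this
      have h0 : clarkeDeriv J (γ u) 0 = 0 := clarkeDeriv_zero J (γ u)
      rw [h0] at this
      rw [map_sub]
      linarith
  -- now the convexity assembly
  intro p hp q hq a a2 ha ha2 hab
  obtain ⟨hpΛ, hpineq, hpcompl⟩ := hp
  obtain ⟨hqΛ, hqineq, hqcompl⟩ := hq
  set u : V := a • p.1 + a2 • q.1 with hu
  set l : E := a • p.2 + a2 • q.2 with hld
  have hlΛ : l ∈ Λ := hΛconv hpΛ hqΛ ha ha2 hab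
  have hM1 := sol_minty p.1 p.2 hpΛ hpineq hpcompl
  have hM2 := sol_minty q.1 q.2 hqΛ hqineq hqcompl
  have hMu : MT u l := by
    intro v ρ hρ
    have m1 := hM1 v ρ hρ
    have m2 := hM2 v ρ hρ
    have hvv : a • v + a2 • v = v := by rw [← add_smul, hab, one_smul]
    have e1 : v - u = a • (v - p.1) + a2 • (v - q.1) := by
      have : a • (v - p.1) + a2 • (v - q.1)
          = (a • v + a2 • v) - (a • p.1 + a2 • q.1) := by module
      rw [this, hvv, hu]
    have ef : f (v - u) = a * f (v - p.1) + a2 * f (v - q.1) := by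
      rw [e1, map_add, map_smul, map_smul]; simp
    have eh : h (v - u) ≤ a * h (v - p.1) + a2 * h (v - q.1) := by
      rw [e1]; exact hconv' _ _ _ _ ha ha2 hab
    have eA : A v (v - u) = a * A v (v - p.1) + a2 * A v (v - q.1) := by
      rw [e1, map_add, map_smul, map_smul]; simp
    have ebv : b v l = a * b v p.2 + a2 * b v q.2 := by
      rw [hld, map_add, map_smul, map_smul]; simp
    have ebu : b u ρ = a * b p.1 ρ + a2 * b q.1 ρ := by
      rw [hu, map_add, map_smul, map_smul]; simp
    have e2 : γ u - γ v = a • (γ p.1 - γ v) + a2 • (γ q.1 - γ v) := by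
      have e2' : u - v = a • (p.1 - v) + a2 • (q.1 - v) := by
        have : a • (p.1 - v) + a2 • (q.1 - v)
            = (a • p.1 + a2 • q.1) - (a • v + a2 • v) := by module
        rw [this, hvv, hu]
      rw [← map_sub, e2', map_add, map_smul, map_smul, map_sub, map_sub]
    have ecd : clarkeDeriv J (γ v) (γ u - γ v)
        ≤ a * clarkeDeriv J (γ v) (γ p.1 - γ v)
          + a2 * clarkeDeriv J (γ v) (γ q.1 - γ v) := by
      rcases eq_or_lt_of_le ha with h0 | hapos
      · have ha2' : a2 = 1 := by linarith
        rw [e2, ← h0, ha2']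
        simp
      rcases eq_or_lt_of_le ha2 with h0 | ha2pos
      · have ha' : a = 1 := by linarith
        rw [e2, ← h0, ha']
        simp
      · rw [e2]
        calc clarkeDeriv J (γ v) (a • (γ p.1 - γ v) + a2 • (γ q.1 - γ v))
            ≤ clarkeDeriv J (γ v) (a • (γ p.1 - γ v))
              + clarkeDeriv J (γ v) (a2 • (γ q.1 - γ v)) :=
              clarkeDeriv_add_le hJ _ _ _
          _ = a * clarkeDeriv J (γ v) (γ p.1 - γ v)
              + a2 * clarkeDeriv J (γ v) (γ q.1 - γ v) := by
              rw [clarkeDeriv_smul hJ _ _ hapos, clarkeDeriv_smul hJ _ _ ha2pos]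
    have m1' := mul_le_mul_of_nonneg_left m1 ha
    have m2' := mul_le_mul_of_nonneg_left m2 ha2
    nlinarith [m1', m2', ef, eh, eA, ebv, ebu, ecd]
  have hfinal := minty_sol u l hlΛ hMu
  have hc1 : (a • p + a2 • q).1 = u := rfl
  have hc2 : (a • p + a2 • q).2 = l := rfl
  refine ⟨?_, ?_, ?_⟩
  · rw [hc2]; exact hlΛ
  · intro v
    rw [hc1, hc2]
    exact hfinal.1 v
  · intro ρ hρ
    rw [hc1, hc2]
    exact hfinal.2 ρ hρ
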